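/- Let f: 2^U → ℝ≥0 be submodular and nonnegative, let k ≥ 1, and let O be a maximizer of f over subsets of size at most k. Suppose A and B are disjoint subsets of U built by the interlaced greedy procedure: starting from A_0 = B_0 = ∅, for i = 1,...,k, a_i maximizes f(A_{i−1} + x) − f(A_{i−1}) over x ∉ A_{i−1} ∪ B_{i−1}, and b_i maximizes f(B_{i−1} + x) − f(B_{i−1}) over x ∉ A_i ∪ B_{i−1} (with dummy elements of zero marginal gain available so the procedure is always defined). Then max{f(A_k), f(B_k)} ≥ f(O)/4. -/
import Mathlib


open Finset

private lemma marg_mono {U : Type*} [DecidableEq U] (f : Finset U → ℝ)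
    (hsub : ∀ X Y : Finset U, f (X ∪ Y) + f (X ∩ Y) ≤ f X + f Y)
    {X Y : Finset U} {x : U} (hXY : X ⊆ Y) (hx : x ∉ Y) :
    f (insert x Y) - f Y ≤ f (insert x X) - f X := by
  have h := hsub (insert x X) Y
  have h1 : insert x X ∪ Y = insert x Y := by
    rw [insert_union, union_eq_right.mpr hXY]
  have h2 : insert x X ∩ Y = X := by
    ext z
    simp only [mem_inter, mem_insert]
    constructor
    · rintro ⟨(rfl | hz), hzY⟩
      · exact absurd hzY hx
      · exact hz
    · intro hz; exact ⟨Or.inr hz, hXY hz⟩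
  rw [h1, h2] at h
  linarith

private lemma telescope {U : Type*} [DecidableEq U] (f : Finset U → ℝ)
    (hsub : ∀ X Y : Finset U, f (X ∪ Y) + f (X ∩ Y) ≤ f X + f Y)
    (W : Finset U) (key : U → ℕ) (c : U → ℝ) :
    ∀ (T : Finset U), Disjoint T W → Set.InjOn key T →
      (∀ o ∈ T, ∃ X : Finset U, X ⊆ W ∪ T.filter (fun t => key t < key o) ∧ o ∉ X ∧
        f (insert o X) - f X ≤ c o) →
      f (W ∪ T) ≤ f W + ∑ o ∈ T, c o := by
  suffices H : ∀ n (T : Finset U), T.card = n → Disjoint T W → Set.InjOn key T →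
      (∀ o ∈ T, ∃ X : Finset U, X ⊆ W ∪ T.filter (fun t => key t < key o) ∧ o ∉ X ∧
        f (insert o X) - f X ≤ c o) →
      f (W ∪ T) ≤ f W + ∑ o ∈ T, c o by
    exact fun T => H T.card T rfl
  intro n
  induction n with
  | zero =>
    intro T hcard _ _ _
    rw [card_eq_zero] at hcard
    simp [hcard]
  | succ n ih =>
    intro T hcard hdisj hinj hX
    have hne : T.Nonempty := card_pos.mp (by omega)
    obtain ⟨o, ho, hmax⟩ := T.exists_max_image key hne
    have hsub' : T.erase o ⊆ T := erase_subset _ _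
    have hcard' : (T.erase o).card = n := by rw [card_erase_of_mem ho]; omega
    have hunion : W ∪ T = insert o (W ∪ T.erase o) := by
      ext z
      by_cases hz : z = o
      · subst hz; simp [ho]
      · simp [mem_erase, hz]
    have hoWT' : o ∉ W ∪ T.erase o := by
      intro h
      rcases mem_union.mp h with h | h
      · exact disjoint_left.mp hdisj ho h
      · exact (mem_erase.mp h).1 rfl
    obtain ⟨X, hXs, hoX, hb⟩ := hX o ho
    have hXs' : X ⊆ W ∪ T.erase o := by
      refine hXs.trans (union_subset_union_right ?_)
      intro t ht
      rw [mem_filter] at ht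
      exact mem_erase.mpr ⟨fun h => by subst h; exact lt_irrefl _ ht.2, ht.1⟩
    have hstep : f (insert o (W ∪ T.erase o)) - f (W ∪ T.erase o) ≤ c o :=
      le_trans (marg_mono f hsub hXs' hoWT') hb
    have hIH : f (W ∪ T.erase o) ≤ f W + ∑ x ∈ T.erase o, c x := by
      apply ih (T.erase o) hcard' (hdisj.mono_left hsub') (hinj.mono (coe_subset.mpr hsub'))
      intro o' ho'
      obtain ⟨X', hX's, ho'X', hb'⟩ := hX o' (hsub' ho')
      refine ⟨X', hX's.trans (union_subset_union_right ?_), ho'X', hb'⟩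
      intro t ht
      rw [mem_filter] at ht
      have hko' : key o' < key o := by
        rcases lt_or_eq_of_le (hmax o' (hsub' ho')) with h | h
        · exact h
        · exact absurd (hinj (hsub' ho') ho h) (mem_erase.mp ho').1
      exact mem_filter.mpr ⟨mem_erase.mpr
        ⟨fun h => by subst h; exact absurd (ht.2.trans hko') (lt_irrefl _), ht.1⟩, ht.2⟩
    have hsum : ∑ x ∈ T, c x = c o + ∑ x ∈ T.erase o, c x := (Finset.add_sum_erase T c ho).symm
    rw [hunion, hsum]
    linarith

private lemma exists_injOn_finset {α β : Type*} [DecidableEq α] [DecidableEq β] [Nonempty β] :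
    ∀ (s : Finset α) (t : Finset β), s.card ≤ t.card →
      ∃ φ : α → β, Set.InjOn φ s ∧ ∀ x ∈ s, φ x ∈ t := by
  intro s
  induction s using Finset.induction_on with
  | empty => exact fun t _ => ⟨fun _ => Classical.arbitrary β, by simp, by simp⟩
  | @insert x s hx ih =>
    intro t hcard
    rw [card_insert_of_notMem hx] at hcard
    have htne : t.Nonempty := card_pos.mp (by omega)
    obtain ⟨y, hy⟩ := htne
    obtain ⟨φ, hinj, hmem⟩ := ih (t.erase y) (by rw [card_erase_of_mem hy]; omega)
    classical
    refine ⟨fun z => if z = x then y else φ z, ?_, ?_⟩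
    · intro u hu v hv huv
      simp only [coe_insert, Set.mem_insert_iff, mem_coe] at hu hv
      simp only at huv
      by_cases hux : u = x <;> by_cases hvx : v = x
      · rw [hux, hvx]
      · exfalso
        rw [if_pos hux, if_neg hvx] at huv
        have hv' : v ∈ s := by tauto
        exact (mem_erase.mp (hmem v hv')).1 huv.symm
      · exfalso
        rw [if_neg hux, if_pos hvx] at huv
        have hu' : u ∈ s := by tauto
        exact (mem_erase.mp (hmem u hu')).1 huv
      · rw [if_neg hux, if_neg hvx] at huv
        have hu' : u ∈ s := by tauto
        have hv' : v ∈ s := by tauto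
        exact hinj hu' hv' huv
    · intro z hz
      rcases mem_insert.mp hz with rfl | hz'
      · simp [hy]
      · have hzx : z ≠ x := fun h => hx (h ▸ hz')
        simp only [if_neg hzx]
        exact erase_subset _ _ (hmem z hz')

set_option maxHeartbeats 1600000 in
/-- Interlaced greedy achieves a 1/4 approximation:
`max{f(A_k), f(B_k)} ≥ f(O)/4`. -/
theorem stmt_8 {U : Type*} [DecidableEq U] [Fintype U]
    (f : Finset U → ℝ)
    (hsub : ∀ X Y : Finset U, f (X ∪ Y) + f (X ∩ Y) ≤ f X + f Y)
    (hnn : ∀ S : Finset U, 0 ≤ f S)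
    (k : ℕ) (hk : 1 ≤ k)
    (dummy : U → Prop) [DecidablePred dummy]
    (hdummy : ∀ (S : Finset U) (x : U), dummy x → f (insert x S) = f S)
    (hdcard : 2 * k ≤ (Finset.univ.filter fun x => dummy x).card)
    (O : Finset U) (hOcard : O.card ≤ k)
    (hOopt : ∀ S : Finset U, S.card ≤ k → f S ≤ f O)
    (hOnodummy : ∀ x ∈ O, ¬ dummy x)
    (a b : Fin k → U) (A B : ℕ → Finset U)
    (hA0 : A 0 = ∅) (hB0 : B 0 = ∅)
    (hAsucc : ∀ i : Fin k, A ((i : ℕ) + 1) = insert (a i) (A (i : ℕ)))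
    (hBsucc : ∀ i : Fin k, B ((i : ℕ) + 1) = insert (b i) (B (i : ℕ)))
    (haNew : ∀ i : Fin k, a i ∉ A (i : ℕ) ∪ B (i : ℕ))
    (hbNew : ∀ i : Fin k, b i ∉ A ((i : ℕ) + 1) ∪ B (i : ℕ))
    (haGreedy : ∀ i : Fin k, ∀ x : U, x ∉ A (i : ℕ) ∪ B (i : ℕ) →
      f (insert x (A (i : ℕ))) - f (A (i : ℕ)) ≤
        f (insert (a i) (A (i : ℕ))) - f (A (i : ℕ)))
    (hbGreedy : ∀ i : Fin k, ∀ x : U, x ∉ A ((i : ℕ) + 1) ∪ B (i : ℕ) →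
      f (insert x (B (i : ℕ))) - f (B (i : ℕ)) ≤
        f (insert (b i) (B (i : ℕ))) - f (B (i : ℕ)))
    (hdisj : Disjoint (A k) (B k)) :
    f O / 4 ≤ max (f (A k)) (f (B k)) := by
  classical
  haveI : Nonempty U := ⟨a ⟨0, hk⟩⟩
  -- ℕ-indexed selection functions
  obtain ⟨a', ha'⟩ : ∃ g : ℕ → U, ∀ i (h : i < k), g i = a ⟨i, h⟩ :=
    ⟨fun i => if h : i < k then a ⟨i, h⟩ else Classical.arbitrary U, fun i h => dif_pos h⟩
  obtain ⟨b', hb'⟩ : ∃ g : ℕ → U, ∀ i (h : i < k), g i = b ⟨i, h⟩ :=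
    ⟨fun i => if h : i < k then b ⟨i, h⟩ else Classical.arbitrary U, fun i h => dif_pos h⟩
  have hA' : ∀ i, i < k → A (i + 1) = insert (a' i) (A i) := by
    intro i hi; rw [ha' i hi]; exact hAsucc ⟨i, hi⟩
  have hB' : ∀ i, i < k → B (i + 1) = insert (b' i) (B i) := by
    intro i hi; rw [hb' i hi]; exact hBsucc ⟨i, hi⟩
  have haN : ∀ i, i < k → a' i ∉ A i ∪ B i := by
    intro i hi; rw [ha' i hi]; exact haNew ⟨i, hi⟩
  have hbN : ∀ i, i < k → b' i ∉ A (i + 1) ∪ B i := by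
    intro i hi; rw [hb' i hi]; exact hbNew ⟨i, hi⟩
  have haG : ∀ i, i < k → ∀ x, x ∉ A i ∪ B i →
      f (insert x (A i)) - f (A i) ≤ f (A (i + 1)) - f (A i) := by
    intro i hi x hx
    calc f (insert x (A i)) - f (A i)
        ≤ f (insert (a ⟨i, hi⟩) (A i)) - f (A i) := haGreedy ⟨i, hi⟩ x hx
      _ = f (A (i + 1)) - f (A i) := by rw [hA' i hi, ha' i hi]
  have hbG : ∀ i, i < k → ∀ x, x ∉ A (i + 1) ∪ B i →
      f (insert x (B i)) - f (B i) ≤ f (B (i + 1)) - f (B i) := by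
    intro i hi x hx
    calc f (insert x (B i)) - f (B i)
        ≤ f (insert (b ⟨i, hi⟩) (B i)) - f (B i) := hbGreedy ⟨i, hi⟩ x hx
      _ = f (B (i + 1)) - f (B i) := by rw [hB' i hi, hb' i hi]
  -- membership structure
  have hAmem : ∀ j, j ≤ k → ∀ x, x ∈ A j ↔ ∃ i, i < j ∧ a' i = x := by
    intro j
    induction j with
    | zero => intro _ x; simp [hA0]
    | succ j ih =>
      intro hj x
      rw [hA' j (by omega), Finset.mem_insert, ih (by omega)]
      constructor
      · rintro (rfl | ⟨i, hi, rfl⟩)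
        · exact ⟨j, by omega, rfl⟩
        · exact ⟨i, by omega, rfl⟩
      · rintro ⟨i, hi, rfl⟩
        by_cases h : i = j
        · subst h; exact Or.inl rfl
        · exact Or.inr ⟨i, by omega, rfl⟩
  have hBmem : ∀ j, j ≤ k → ∀ x, x ∈ B j ↔ ∃ i, i < j ∧ b' i = x := by
    intro j
    induction j with
    | zero => intro _ x; simp [hB0]
    | succ j ih =>
      intro hj x
      rw [hB' j (by omega), Finset.mem_insert, ih (by omega)]
      constructor
      · rintro (rfl | ⟨i, hi, rfl⟩)
        · exact ⟨j, by omega, rfl⟩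
        · exact ⟨i, by omega, rfl⟩
      · rintro ⟨i, hi, rfl⟩
        by_cases h : i = j
        · subst h; exact Or.inl rfl
        · exact Or.inr ⟨i, by omega, rfl⟩
  have hAsub : ∀ i j, i ≤ j → j ≤ k → A i ⊆ A j := by
    intro i j hij hjk x hx
    rw [hAmem i (by omega)] at hx
    rw [hAmem j hjk]
    obtain ⟨l, hl, rfl⟩ := hx
    exact ⟨l, by omega, rfl⟩
  have hBsub : ∀ i j, i ≤ j → j ≤ k → B i ⊆ B j := by
    intro i j hij hjk x hx
    rw [hBmem i (by omega)] at hx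
    rw [hBmem j hjk]
    obtain ⟨l, hl, rfl⟩ := hx
    exact ⟨l, by omega, rfl⟩
  have haAk : ∀ i, i < k → a' i ∈ A k := fun i hi => (hAmem k le_rfl _).mpr ⟨i, hi, rfl⟩
  have hbBk : ∀ i, i < k → b' i ∈ B k := fun i hi => (hBmem k le_rfl _).mpr ⟨i, hi, rfl⟩
  have hanotA : ∀ i, i < k → a' i ∉ A i := by
    intro i hi h; exact haN i hi (Finset.mem_union_left _ h)
  have hbnotB : ∀ i, i < k → b' i ∉ B i := by
    intro i hi h; exact hbN i hi (Finset.mem_union_right _ h)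
  have ha'inj : ∀ i, i < k → ∀ j, j < k → a' i = a' j → i = j := by
    intro i hi j hj hij
    by_contra hne
    rcases Nat.lt_or_ge i j with h | h
    · have hmem : a' i ∈ A j := hAsub (i + 1) j (by omega) (by omega)
        (by rw [hA' i hi]; exact Finset.mem_insert_self _ _)
      rw [hij] at hmem
      exact hanotA j hj hmem
    · have h' : j < i := by omega
      have hmem : a' j ∈ A i := hAsub (j + 1) i (by omega) (by omega)
        (by rw [hA' j hj]; exact Finset.mem_insert_self _ _)
      rw [← hij] at hmem
      exact hanotA i hi hmem
  have hb'inj : ∀ i, i < k → ∀ j, j < k → b' i = b' j → i = j := by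
    intro i hi j hj hij
    by_contra hne
    rcases Nat.lt_or_ge i j with h | h
    · have hmem : b' i ∈ B j := hBsub (i + 1) j (by omega) (by omega)
        (by rw [hB' i hi]; exact Finset.mem_insert_self _ _)
      rw [hij] at hmem
      exact hbnotB j hj hmem
    · have h' : j < i := by omega
      have hmem : b' j ∈ B i := hBsub (j + 1) i (by omega) (by omega)
        (by rw [hB' j hj]; exact Finset.mem_insert_self _ _)
      rw [← hij] at hmem
      exact hbnotB i hi hmem
  -- cards
  have hAcard : ∀ i, i ≤ k → (A i).card ≤ i := by
    intro i
    induction i with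
    | zero => intro _; simp [hA0]
    | succ i ih =>
      intro hi
      rw [hA' i (by omega)]
      have h1 := Finset.card_insert_le (a' i) (A i)
      have h2 := ih (by omega)
      omega
  have hBcard : ∀ i, i ≤ k → (B i).card ≤ i := by
    intro i
    induction i with
    | zero => intro _; simp [hB0]
    | succ i ih =>
      intro hi
      rw [hB' i (by omega)]
      have h1 := Finset.card_insert_le (b' i) (B i)
      have h2 := ih (by omega)
      omega
  -- dummies give nonnegative gains
  have hdummyavail : ∀ S : Finset U, S.card < 2 * k → ∃ x, dummy x ∧ x ∉ S := by
    intro S hS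
    by_contra h
    push_neg at h
    have hsub2 : (Finset.univ.filter fun x => dummy x) ⊆ S := by
      intro x hx; exact h x (Finset.mem_filter.mp hx).2
    have := Finset.card_le_card hsub2
    omega
  have hgA : ∀ i, i < k → 0 ≤ f (A (i + 1)) - f (A i) := by
    intro i hi
    have hcard : (A i ∪ B i).card < 2 * k := by
      have h1 := Finset.card_union_le (A i) (B i)
      have h2 := hAcard i (by omega)
      have h3 := hBcard i (by omega)
      omega
    obtain ⟨x, hxd, hxn⟩ := hdummyavail _ hcard
    have h0 := haG i hi x hxn
    rw [hdummy (A i) x hxd] at h0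
    linarith
  have hgB : ∀ i, i < k → 0 ≤ f (B (i + 1)) - f (B i) := by
    intro i hi
    have hcard : (A (i + 1) ∪ B i).card < 2 * k := by
      have h1 := Finset.card_union_le (A (i + 1)) (B i)
      have h2 := hAcard (i + 1) (by omega)
      have h3 := hBcard i (by omega)
      omega
    obtain ⟨x, hxd, hxn⟩ := hdummyavail _ hcard
    have h0 := hbG i hi x hxn
    rw [hdummy (B i) x hxd] at h0
    linarith
  -- prefixes p and q
  have hexp : ∃ n, k ≤ n ∨ a' n ∉ O := ⟨k, Or.inl le_rfl⟩
  have hexq : ∃ n, k ≤ n ∨ b' n ∉ O := ⟨k, Or.inl le_rfl⟩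
  set p := Nat.find hexp with hpdef
  set q := Nat.find hexq with hqdef
  have hpk : p ≤ k := Nat.find_min' hexp (Or.inl le_rfl)
  have hqk : q ≤ k := Nat.find_min' hexq (Or.inl le_rfl)
  have hpin : ∀ i, i < p → a' i ∈ O ∧ i < k := by
    intro i hip
    have h := Nat.find_min hexp hip
    push_neg at h
    exact ⟨h.2, by omega⟩
  have hqin : ∀ i, i < q → b' i ∈ O ∧ i < k := by
    intro i hiq
    have h := Nat.find_min hexq hiq
    push_neg at h
    exact ⟨h.2, by omega⟩
  have hpO : p < k → a' p ∉ O := by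
    intro h
    rcases Nat.find_spec hexp with h' | h'
    · omega
    · exact h'
  have hqO : q < k → b' q ∉ O := by
    intro h
    rcases Nat.find_spec hexq with h' | h'
    · omega
    · exact h'
  have hne_p : ∀ j, j < k → a' j ∈ O → j ≠ p := by
    intro j hj hjO h; exact hpO (h ▸ hj) (h ▸ hjO)
  have hne_q : ∀ j, j < k → b' j ∈ O → j ≠ q := by
    intro j hj hjO h; exact hqO (h ▸ hj) (h ▸ hjO)
  -- slot assignment rules
  obtain ⟨CA, hCAdef⟩ : ∃ P : ℕ → Prop,
      ∀ j, P j ↔ (j < p ∧ (¬(j < k ∧ b' j ∈ O) ∨ j < q)) := ⟨_, fun _ => Iff.rfl⟩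
  obtain ⟨CB, hCBdef⟩ : ∃ P : ℕ → Prop,
      ∀ j, P j ↔ (j < q ∧ (¬(j + 1 < k ∧ a' (j + 1) ∈ O) ∨ j + 1 < p)) := ⟨_, fun _ => Iff.rfl⟩
  obtain ⟨sA, hsA1, hsA2⟩ : ∃ s : ℕ → ℕ ⊕ ℕ,
      (∀ j, CA j → s j = Sum.inl j) ∧ (∀ j, ¬CA j → s j = Sum.inr (j - 1)) :=
    ⟨fun j => if CA j then Sum.inl j else Sum.inr (j - 1),
      fun j h => if_pos h, fun j h => if_neg h⟩
  obtain ⟨sB, hsB1, hsB2⟩ : ∃ s : ℕ → ℕ ⊕ ℕ,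
      (∀ j, CB j → s j = Sum.inr j) ∧ (∀ j, ¬CB j → s j = Sum.inl j) :=
    ⟨fun j => if CB j then Sum.inr j else Sum.inl j,
      fun j h => if_pos h, fun j h => if_neg h⟩
  -- if a_j ∈ O falls in the else-branch then j ≥ 1
  have hsApos : ∀ j, j < k → a' j ∈ O → ¬CA j → 1 ≤ j := by
    intro j hj hjO hca
    by_contra h
    have hj0 : j = 0 := by omega
    subst hj0
    apply hca
    rw [hCAdef]
    have hp0 : 0 < p := by
      have := hne_p 0 hj hjO; omega
    refine ⟨hp0, ?_⟩
    by_cases h0 : 0 < k ∧ b' 0 ∈ O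
    · have := hne_q 0 h0.1 h0.2
      exact Or.inr (by omega)
    · exact Or.inl h0
  -- injectivity of slot rules
  have hsAinj : ∀ j, j < k → a' j ∈ O → ∀ j', j' < k → a' j' ∈ O → sA j = sA j' → j = j' := by
    intro j hj hjO j' hj' hj'O h
    by_cases h1 : CA j <;> by_cases h2 : CA j'
    · rw [hsA1 j h1, hsA1 j' h2] at h; exact Sum.inl.inj h
    · rw [hsA1 j h1, hsA2 j' h2] at h; exact absurd h (by simp)
    · rw [hsA2 j h1, hsA1 j' h2] at h; exact absurd h (by simp)
    · rw [hsA2 j h1, hsA2 j' h2] at h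
      have e1 := hsApos j hj hjO h1
      have e2 := hsApos j' hj' hj'O h2
      have := Sum.inr.inj h
      omega
  have hsBinj : ∀ j j', sB j = sB j' → j = j' := by
    intro j j' h
    by_cases h1 : CB j <;> by_cases h2 : CB j'
    · rw [hsB1 j h1, hsB1 j' h2] at h; exact Sum.inr.inj h
    · rw [hsB1 j h1, hsB2 j' h2] at h; exact absurd h (by simp)
    · rw [hsB2 j h1, hsB1 j' h2] at h; exact absurd h (by simp)
    · rw [hsB2 j h1, hsB2 j' h2] at h; exact Sum.inl.inj h
  -- the two slot rules never collide
  have hsAB : ∀ j, j < k → a' j ∈ O → ∀ j', j' < k → b' j' ∈ O → sA j ≠ sB j' := by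
    intro j hj hjO j' hj' hj'O h
    by_cases h1 : CA j <;> by_cases h2 : CB j'
    · rw [hsA1 j h1, hsB1 j' h2] at h; exact absurd h (by simp)
    · -- inl j = inl j' so j = j'
      rw [hsA1 j h1, hsB2 j' h2] at h
      have hjj : j = j' := Sum.inl.inj h
      subst hjj
      rw [hCAdef] at h1
      obtain ⟨hjp, hor⟩ := h1
      have hjq : j < q := by
        rcases hor with h' | h'
        · exact absurd ⟨hj, hj'O⟩ h'
        · exact h'
      rw [hCBdef] at h2
      push_neg at h2
      obtain ⟨hJ1, hge⟩ := h2 hjq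
      have := hne_p (j + 1) hJ1.1 hJ1.2
      omega
    · -- inr (j-1) = inr j'
      rw [hsA2 j h1, hsB1 j' h2] at h
      have hjj : j - 1 = j' := Sum.inr.inj h
      have hj1 : 1 ≤ j := hsApos j hj hjO h1
      have hjeq : j = j' + 1 := by omega
      rw [hCBdef] at h2
      obtain ⟨hj'q, hor⟩ := h2
      have hjp : j < p := by
        rcases hor with h' | h'
        · exfalso; apply h'; constructor
          · omega
          · rw [← hjeq]; exact hjO
        · omega
      rw [hCAdef] at h1
      push_neg at h1
      obtain ⟨hJ'j, hqle⟩ := h1 hjp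
      have := hne_q j hJ'j.1 hJ'j.2
      omega
    · rw [hsA2 j h1, hsB2 j' h2] at h; exact absurd h (by simp)
  -- index sets and used/free slots
  set Jset := (Finset.range k).filter (fun j => a' j ∈ O) with hJsetdef
  set J'set := (Finset.range k).filter (fun j => b' j ∈ O) with hJ'setdef
  set used : Finset (ℕ ⊕ ℕ) := Jset.image sA ∪ J'set.image sB with huseddef
  set freeA := (Finset.range k).filter (fun i => Sum.inl i ∉ used) with hfreeAdef
  set freeB := (Finset.range k).filter (fun i => Sum.inr i ∉ used) with hfreeBdef
  set R := O \ (A k ∪ B k) with hRdef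
  -- cardinality accounting
  have hJim : Jset.image a' = O ∩ A k := by
    ext x
    simp only [Finset.mem_image, hJsetdef, Finset.mem_filter, Finset.mem_range,
      Finset.mem_inter]
    constructor
    · rintro ⟨j, ⟨hjk, hjO⟩, rfl⟩
      exact ⟨hjO, haAk j hjk⟩
    · rintro ⟨hxO, hxA⟩
      obtain ⟨i, hik, rfl⟩ := (hAmem k le_rfl x).mp hxA
      exact ⟨i, ⟨hik, hxO⟩, rfl⟩
  have hJ'im : J'set.image b' = O ∩ B k := by
    ext x
    simp only [Finset.mem_image, hJ'setdef, Finset.mem_filter, Finset.mem_range,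
      Finset.mem_inter]
    constructor
    · rintro ⟨j, ⟨hjk, hjO⟩, rfl⟩
      exact ⟨hjO, hbBk j hjk⟩
    · rintro ⟨hxO, hxB⟩
      obtain ⟨i, hik, rfl⟩ := (hBmem k le_rfl x).mp hxB
      exact ⟨i, ⟨hik, hxO⟩, rfl⟩
  have hJcard : Jset.card = (O ∩ A k).card := by
    rw [← hJim]
    exact (Finset.card_image_of_injOn (fun i hi j hj hij =>
      ha'inj i (Finset.mem_range.mp (Finset.mem_filter.mp hi).1) j
        (Finset.mem_range.mp (Finset.mem_filter.mp hj).1) hij)).symm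
  have hJ'card : J'set.card = (O ∩ B k).card := by
    rw [← hJ'im]
    exact (Finset.card_image_of_injOn (fun i hi j hj hij =>
      hb'inj i (Finset.mem_range.mp (Finset.mem_filter.mp hi).1) j
        (Finset.mem_range.mp (Finset.mem_filter.mp hj).1) hij)).symm
  have hOsplit : (O ∩ A k).card + (O ∩ B k).card + R.card ≤ k := by
    have h1 : (O \ (A k ∪ B k)).card + (O ∩ (A k ∪ B k)).card = O.card :=
      Finset.card_sdiff_add_card_inter O _
    have h2 : O ∩ (A k ∪ B k) = (O ∩ A k) ∪ (O ∩ B k) := Finset.inter_union_distrib_left _ _ _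
    have h3 : Disjoint (O ∩ A k) (O ∩ B k) :=
      hdisj.mono Finset.inter_subset_right Finset.inter_subset_right
    rw [h2, Finset.card_union_of_disjoint h3] at h1
    rw [hRdef]
    omega
  have husedcard : used.card ≤ Jset.card + J'set.card := by
    rw [huseddef]
    exact (Finset.card_union_le _ _).trans
      (add_le_add Finset.card_image_le Finset.card_image_le)
  have hfreeAcard : R.card ≤ freeA.card := by
    have h1 : ((Finset.range k).filter (fun i => Sum.inl i ∈ used)).card ≤ used.card := by
      apply Finset.card_le_card_of_injOn (fun i => Sum.inl i)
      · intro i hi; exact (Finset.mem_filter.mp hi).2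
      · intro i _ j _ h; exact Sum.inl.inj h
    have h2 : ((Finset.range k).filter (fun i => Sum.inl i ∈ used)).card + freeA.card = k := by
      rw [hfreeAdef, Finset.card_filter_add_card_filter_not, Finset.card_range]
    omega
  have hfreeBcard : R.card ≤ freeB.card := by
    have h1 : ((Finset.range k).filter (fun i => Sum.inr i ∈ used)).card ≤ used.card := by
      apply Finset.card_le_card_of_injOn (fun i => Sum.inr i)
      · intro i hi; exact (Finset.mem_filter.mp hi).2
      · intro i _ j _ h; exact Sum.inr.inj h
    have h2 : ((Finset.range k).filter (fun i => Sum.inr i ∈ used)).card + freeB.card = k := by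
      rw [hfreeBdef, Finset.card_filter_add_card_filter_not, Finset.card_range]
    omega
  obtain ⟨φ, hφinj, hφmem⟩ := exists_injOn_finset R freeA hfreeAcard
  obtain ⟨ψ, hψinj, hψmem⟩ := exists_injOn_finset R freeB hfreeBcard
  -- index recovery
  obtain ⟨idxA, hidxA⟩ : ∃ ι : U → ℕ, ∀ j, j < k → ι (a' j) = j := by
    refine ⟨fun x => if h : ∃ j, j < k ∧ a' j = x then h.choose else 0, ?_⟩
    intro j hj
    have hex : ∃ j', j' < k ∧ a' j' = a' j := ⟨j, hj, rfl⟩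
    simp only [dif_pos hex]
    obtain ⟨h1, h2⟩ := hex.choose_spec
    exact ha'inj _ h1 _ hj h2
  obtain ⟨idxB, hidxB⟩ : ∃ ι : U → ℕ, ∀ j, j < k → ι (b' j) = j := by
    refine ⟨fun x => if h : ∃ j, j < k ∧ b' j = x then h.choose else 0, ?_⟩
    intro j hj
    have hex : ∃ j', j' < k ∧ b' j' = b' j := ⟨j, hj, rfl⟩
    simp only [dif_pos hex]
    obtain ⟨h1, h2⟩ := hex.choose_spec
    exact hb'inj _ h1 _ hj h2
  have hidxA' : ∀ x ∈ A k, idxA x < k ∧ a' (idxA x) = x := by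
    intro x hx
    obtain ⟨i, hik, rfl⟩ := (hAmem k le_rfl x).mp hx
    rw [hidxA i hik]; exact ⟨hik, rfl⟩
  have hidxB' : ∀ x ∈ B k, idxB x < k ∧ b' (idxB x) = x := by
    intro x hx
    obtain ⟨i, hik, rfl⟩ := (hBmem k le_rfl x).mp hx
    rw [hidxB i hik]; exact ⟨hik, rfl⟩
  -- keys and slot maps for the two telescopes
  obtain ⟨keyA, hkeyA1, hkeyA2⟩ : ∃ κ : U → ℕ,
      (∀ x, x ∈ B k → κ x = idxB x) ∧
      (∀ x, x ∉ B k → κ x = k + (Fintype.equivFin U x : ℕ)) :=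
    ⟨fun x => if x ∈ B k then idxB x else k + (Fintype.equivFin U x : ℕ),
      fun x h => if_pos h, fun x h => if_neg h⟩
  obtain ⟨keyB, hkeyB1, hkeyB2⟩ : ∃ κ : U → ℕ,
      (∀ x, x ∈ A k → κ x = idxA x) ∧
      (∀ x, x ∉ A k → κ x = k + (Fintype.equivFin U x : ℕ)) :=
    ⟨fun x => if x ∈ A k then idxA x else k + (Fintype.equivFin U x : ℕ),
      fun x h => if_pos h, fun x h => if_neg h⟩
  obtain ⟨g, hgl, hgr⟩ : ∃ g : ℕ ⊕ ℕ → ℝ,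
      (∀ i, g (Sum.inl i) = f (A (i + 1)) - f (A i)) ∧
      (∀ i, g (Sum.inr i) = f (B (i + 1)) - f (B i)) :=
    ⟨Sum.elim (fun i => f (A (i + 1)) - f (A i)) (fun i => f (B (i + 1)) - f (B i)),
      fun _ => rfl, fun _ => rfl⟩
  obtain ⟨sTA, hsTA1, hsTA2⟩ : ∃ s : U → ℕ ⊕ ℕ,
      (∀ x, x ∈ B k → s x = sB (idxB x)) ∧ (∀ x, x ∉ B k → s x = Sum.inl (φ x)) :=
    ⟨fun x => if x ∈ B k then sB (idxB x) else Sum.inl (φ x),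
      fun x h => if_pos h, fun x h => if_neg h⟩
  obtain ⟨sTB, hsTB1, hsTB2⟩ : ∃ s : U → ℕ ⊕ ℕ,
      (∀ x, x ∈ A k → s x = sA (idxA x)) ∧ (∀ x, x ∉ A k → s x = Sum.inr (ψ x)) :=
    ⟨fun x => if x ∈ A k then sA (idxA x) else Sum.inr (ψ x),
      fun x h => if_pos h, fun x h => if_neg h⟩
  set TA := O \ A k with hTAdef
  set TB := O \ B k with hTBdef
  have hTAmem : ∀ x ∈ TA, x ∈ O ∧ x ∉ A k := fun x hx => Finset.mem_sdiff.mp hx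
  have hTBmem : ∀ x ∈ TB, x ∈ O ∧ x ∉ B k := fun x hx => Finset.mem_sdiff.mp hx
  have hRmemA : ∀ x ∈ TA, x ∉ B k → x ∈ R := by
    intro x hx hxB
    rw [hRdef, Finset.mem_sdiff]
    obtain ⟨h1, h2⟩ := hTAmem x hx
    exact ⟨h1, by simp [h2, hxB]⟩
  have hRmemB : ∀ x ∈ TB, x ∉ A k → x ∈ R := by
    intro x hx hxA
    rw [hRdef, Finset.mem_sdiff]
    obtain ⟨h1, h2⟩ := hTBmem x hx
    exact ⟨h1, by simp [h2, hxA]⟩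
  have hφk : ∀ x ∈ R, φ x < k := by
    intro x hx
    have := hφmem x hx
    rw [hfreeAdef] at this
    exact Finset.mem_range.mp (Finset.mem_filter.mp this).1
  have hψk : ∀ x ∈ R, ψ x < k := by
    intro x hx
    have := hψmem x hx
    rw [hfreeBdef] at this
    exact Finset.mem_range.mp (Finset.mem_filter.mp this).1
  -- Telescope 1 : the A-side
  have htel1 : f (A k ∪ TA) ≤ f (A k) + ∑ o ∈ TA, g (sTA o) := by
    apply telescope f hsub (A k) keyA (fun o => g (sTA o)) TA Finset.sdiff_disjoint
    · -- InjOn keyA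
      intro x hx y hy hxy
      rw [Finset.mem_coe] at hx hy
      by_cases hxB : x ∈ B k <;> by_cases hyB : y ∈ B k
      · rw [hkeyA1 x hxB, hkeyA1 y hyB] at hxy
        obtain ⟨h1, h2⟩ := hidxB' x hxB
        obtain ⟨h3, h4⟩ := hidxB' y hyB
        rw [← h2, ← h4, hxy]
      · rw [hkeyA1 x hxB, hkeyA2 y hyB] at hxy
        have := (hidxB' x hxB).1; omega
      · rw [hkeyA2 x hxB, hkeyA1 y hyB] at hxy
        have := (hidxB' y hyB).1; omega
      · rw [hkeyA2 x hxB, hkeyA2 y hyB] at hxy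
        have : Fintype.equivFin U x = Fintype.equivFin U y := Fin.ext (by omega)
        exact (Fintype.equivFin U).injective this
    · -- per-element hypothesis
      intro o ho
      obtain ⟨hoO, hoA⟩ := hTAmem o ho
      by_cases hoB : o ∈ B k
      · obtain ⟨j, hjk, rfl⟩ := (hBmem k le_rfl o).mp hoB
        have hidx : idxB (b' j) = j := hidxB j hjk
        by_cases hcb : CB j
        · refine ⟨B j, ?_, hbnotB j hjk, ?_⟩
          · intro x hx
            obtain ⟨i, hij, rfl⟩ := (hBmem j (by omega) x).mp hx
            have hik : i < k := by omega
            have hiq : i < q := by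
              have := (hCBdef j).mp hcb
              omega
            apply Finset.mem_union_right
            rw [Finset.mem_filter]
            refine ⟨Finset.mem_sdiff.mpr ⟨(hqin i hiq).1, ?_⟩, ?_⟩
            · intro hcon
              exact (Finset.disjoint_left.mp hdisj hcon) (hbBk i hik)
            · rw [hkeyA1 _ (hbBk i hik), hkeyA1 _ hoB, hidxB i hik, hidx]
              omega
          · rw [hsTA1 _ hoB, hidx, hsB1 j hcb, hgr, ← hB' j hjk]
        · refine ⟨A j, (hAsub j k (by omega) le_rfl).trans Finset.subset_union_left, ?_, ?_⟩
          · intro hcon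
            exact (Finset.disjoint_left.mp hdisj (hAsub j k (by omega) le_rfl hcon)) hoB
          · rw [hsTA1 _ hoB, hidx, hsB2 j hcb, hgl]
            apply haG j hjk
            intro hm
            rcases Finset.mem_union.mp hm with h | h
            · exact hbN j hjk (Finset.mem_union_left _ (hAsub j (j + 1) (by omega) (by omega) h))
            · exact hbN j hjk (Finset.mem_union_right _ h)
      · have hoR : o ∈ R := hRmemA o ho hoB
        have hok : φ o < k := hφk o hoR
        refine ⟨A (φ o), (hAsub _ k (by omega) le_rfl).trans Finset.subset_union_left,
          fun h => hoA (hAsub _ k (by omega) le_rfl h), ?_⟩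
        rw [hsTA2 _ hoB, hgl]
        apply haG _ hok
        intro hm
        rcases Finset.mem_union.mp hm with h | h
        · exact hoA (hAsub _ k (by omega) le_rfl h)
        · exact hoB (hBsub _ k (by omega) le_rfl h)
  -- Telescope 2 : the B-side
  have htel2 : f (B k ∪ TB) ≤ f (B k) + ∑ o ∈ TB, g (sTB o) := by
    apply telescope f hsub (B k) keyB (fun o => g (sTB o)) TB Finset.sdiff_disjoint
    · intro x hx y hy hxy
      rw [Finset.mem_coe] at hx hy
      by_cases hxA : x ∈ A k <;> by_cases hyA : y ∈ A k
      · rw [hkeyB1 x hxA, hkeyB1 y hyA] at hxy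
        obtain ⟨h1, h2⟩ := hidxA' x hxA
        obtain ⟨h3, h4⟩ := hidxA' y hyA
        rw [← h2, ← h4, hxy]
      · rw [hkeyB1 x hxA, hkeyB2 y hyA] at hxy
        have := (hidxA' x hxA).1; omega
      · rw [hkeyB2 x hxA, hkeyB1 y hyA] at hxy
        have := (hidxA' y hyA).1; omega
      · rw [hkeyB2 x hxA, hkeyB2 y hyA] at hxy
        have : Fintype.equivFin U x = Fintype.equivFin U y := Fin.ext (by omega)
        exact (Fintype.equivFin U).injective this
    · intro o ho
      obtain ⟨hoO, hoB⟩ := hTBmem o ho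
      by_cases hoA : o ∈ A k
      · obtain ⟨j, hjk, rfl⟩ := (hAmem k le_rfl o).mp hoA
        have hidx : idxA (a' j) = j := hidxA j hjk
        by_cases hca : CA j
        · have hjp : j < p := ((hCAdef j).mp hca).1
          refine ⟨A j, ?_, hanotA j hjk, ?_⟩
          · intro x hx
            obtain ⟨i, hij, rfl⟩ := (hAmem j (by omega) x).mp hx
            have hik : i < k := by omega
            apply Finset.mem_union_right
            rw [Finset.mem_filter]
            refine ⟨Finset.mem_sdiff.mpr ⟨(hpin i (by omega)).1, ?_⟩, ?_⟩
            · intro hcon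
              exact (Finset.disjoint_left.mp hdisj (haAk i hik)) hcon
            · rw [hkeyB1 _ (haAk i hik), hkeyB1 _ hoA, hidxA i hik, hidx]
              omega
          · rw [hsTB1 _ hoA, hidx, hsA1 j hca, hgl, ← hA' j hjk]
        · have hj1 : 1 ≤ j := hsApos j hjk hoO hca
          have hj1' : j - 1 + 1 = j := by omega
          refine ⟨B (j - 1), (hBsub (j - 1) k (by omega) le_rfl).trans Finset.subset_union_left,
            ?_, ?_⟩
          · intro hcon
            exact (Finset.disjoint_left.mp hdisj hoA) (hBsub (j - 1) k (by omega) le_rfl hcon)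
          · rw [hsTB1 _ hoA, hidx, hsA2 j hca, hgr, hj1']
            have hstep := hbG (j - 1) (by omega) (a' j)
            rw [hj1'] at hstep
            apply hstep
            intro hm
            rcases Finset.mem_union.mp hm with h | h
            · exact haN j hjk (Finset.mem_union_left _ h)
            · exact haN j hjk (Finset.mem_union_right _ (hBsub (j - 1) j (by omega) (by omega) h))
      · have hoR : o ∈ R := hRmemB o ho hoA
        have hok : ψ o < k := hψk o hoR
        refine ⟨B (ψ o), (hBsub _ k (by omega) le_rfl).trans Finset.subset_union_left,
          fun h => hoB (hBsub _ k (by omega) le_rfl h), ?_⟩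
        rw [hsTB2 _ hoA, hgr]
        apply hbG _ hok
        intro hm
        rcases Finset.mem_union.mp hm with h | h
        · exact hoA (hAsub _ k (by omega) le_rfl h)
        · exact hoB (hBsub _ k (by omega) le_rfl h)
  -- slots of chosen elements are "used"; slots of R-elements are not
  have husedA : ∀ j, j < k → a' j ∈ O → sA j ∈ used := by
    intro j hj hO
    rw [huseddef]
    exact Finset.mem_union_left _ (Finset.mem_image_of_mem sA
      (by rw [hJsetdef]; exact Finset.mem_filter.mpr ⟨Finset.mem_range.mpr hj, hO⟩))
  have husedB : ∀ j, j < k → b' j ∈ O → sB j ∈ used := by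
    intro j hj hO
    rw [huseddef]
    exact Finset.mem_union_right _ (Finset.mem_image_of_mem sB
      (by rw [hJ'setdef]; exact Finset.mem_filter.mpr ⟨Finset.mem_range.mpr hj, hO⟩))
  have hfreeAnot : ∀ x ∈ R, Sum.inl (φ x) ∉ used := by
    intro x hx
    have h := hφmem x hx
    rw [hfreeAdef] at h
    exact (Finset.mem_filter.mp h).2
  have hfreeBnot : ∀ x ∈ R, Sum.inr (ψ x) ∉ used := by
    intro x hx
    have h := hψmem x hx
    rw [hfreeBdef] at h
    exact (Finset.mem_filter.mp h).2
  -- injectivity of the slot maps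
  have hinjTA : Set.InjOn sTA ↑TA := by
    intro x hx y hy hxy
    rw [Finset.mem_coe] at hx hy
    obtain ⟨hxO, hxA⟩ := hTAmem x hx
    obtain ⟨hyO, hyA⟩ := hTAmem y hy
    by_cases hxB : x ∈ B k <;> by_cases hyB : y ∈ B k
    · rw [hsTA1 x hxB, hsTA1 y hyB] at hxy
      obtain ⟨h1, h2⟩ := hidxB' x hxB
      obtain ⟨h3, h4⟩ := hidxB' y hyB
      rw [← h2, ← h4, hsBinj _ _ hxy]
    · exfalso
      rw [hsTA1 x hxB, hsTA2 y hyB] at hxy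
      have h1 : sB (idxB x) ∈ used :=
        husedB (idxB x) (hidxB' x hxB).1 (by rw [(hidxB' x hxB).2]; exact hxO)
      rw [hxy] at h1
      exact hfreeAnot y (hRmemA y hy hyB) h1
    · exfalso
      rw [hsTA2 x hxB, hsTA1 y hyB] at hxy
      have h1 : sB (idxB y) ∈ used :=
        husedB (idxB y) (hidxB' y hyB).1 (by rw [(hidxB' y hyB).2]; exact hyO)
      rw [← hxy] at h1
      exact hfreeAnot x (hRmemA x hx hxB) h1
    · rw [hsTA2 x hxB, hsTA2 y hyB] at hxy
      exact hφinj (Finset.mem_coe.mpr (hRmemA x hx hxB)) (Finset.mem_coe.mpr (hRmemA y hy hyB))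
        (Sum.inl.inj hxy)
  have hinjTB : Set.InjOn sTB ↑TB := by
    intro x hx y hy hxy
    rw [Finset.mem_coe] at hx hy
    obtain ⟨hxO, hxB⟩ := hTBmem x hx
    obtain ⟨hyO, hyB⟩ := hTBmem y hy
    by_cases hxA : x ∈ A k <;> by_cases hyA : y ∈ A k
    · rw [hsTB1 x hxA, hsTB1 y hyA] at hxy
      obtain ⟨h1, h2⟩ := hidxA' x hxA
      obtain ⟨h3, h4⟩ := hidxA' y hyA
      rw [← h2, ← h4, hsAinj _ h1 (by rw [h2]; exact hxO) _ h3 (by rw [h4]; exact hyO) hxy]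
    · exfalso
      rw [hsTB1 x hxA, hsTB2 y hyA] at hxy
      have h1 : sA (idxA x) ∈ used :=
        husedA (idxA x) (hidxA' x hxA).1 (by rw [(hidxA' x hxA).2]; exact hxO)
      rw [hxy] at h1
      exact hfreeBnot y (hRmemB y hy hyA) h1
    · exfalso
      rw [hsTB2 x hxA, hsTB1 y hyA] at hxy
      have h1 : sA (idxA y) ∈ used :=
        husedA (idxA y) (hidxA' y hyA).1 (by rw [(hidxA' y hyA).2]; exact hyO)
      rw [← hxy] at h1
      exact hfreeBnot x (hRmemB x hx hxA) h1
    · rw [hsTB2 x hxA, hsTB2 y hyA] at hxy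
      exact hψinj (Finset.mem_coe.mpr (hRmemB x hx hxA)) (Finset.mem_coe.mpr (hRmemB y hy hyA))
        (Sum.inr.inj hxy)
  -- the images of the two slot maps are disjoint
  have hdisjim : Disjoint (TA.image sTA) (TB.image sTB) := by
    rw [Finset.disjoint_left]
    intro s hs1 hs2
    obtain ⟨x, hx, rfl⟩ := Finset.mem_image.mp hs1
    obtain ⟨y, hy, heq⟩ := Finset.mem_image.mp hs2
    obtain ⟨hxO, hxA⟩ := hTAmem x hx
    obtain ⟨hyO, hyB⟩ := hTBmem y hy
    by_cases hxB : x ∈ B k <;> by_cases hyA : y ∈ A k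
    · apply hsAB (idxA y) (hidxA' y hyA).1 (by rw [(hidxA' y hyA).2]; exact hyO)
        (idxB x) (hidxB' x hxB).1 (by rw [(hidxB' x hxB).2]; exact hxO)
      rw [← hsTA1 x hxB, ← hsTB1 y hyA, heq]
    · have h1 : sB (idxB x) ∈ used :=
        husedB (idxB x) (hidxB' x hxB).1 (by rw [(hidxB' x hxB).2]; exact hxO)
      rw [← hsTA1 x hxB, ← heq, hsTB2 y hyA] at h1
      exact hfreeBnot y (hRmemB y hy hyA) h1
    · have h1 : sA (idxA y) ∈ used :=
        husedA (idxA y) (hidxA' y hyA).1 (by rw [(hidxA' y hyA).2]; exact hyO)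
      rw [← hsTB1 y hyA, heq, hsTA2 x hxB] at h1
      exact hfreeAnot x (hRmemA x hx hxB) h1
    · rw [hsTA2 x hxB, hsTB2 y hyA] at heq
      exact absurd heq (by simp)
  -- all slots are valid and carry nonnegative value
  set valid : Finset (ℕ ⊕ ℕ) :=
    ((Finset.range k).image Sum.inl) ∪ ((Finset.range k).image Sum.inr) with hvaliddef
  have hvalinl : ∀ i, i < k → (Sum.inl i : ℕ ⊕ ℕ) ∈ valid := by
    intro i hi
    rw [hvaliddef]
    exact Finset.mem_union_left _ (Finset.mem_image_of_mem _ (Finset.mem_range.mpr hi))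
  have hvalinr : ∀ i, i < k → (Sum.inr i : ℕ ⊕ ℕ) ∈ valid := by
    intro i hi
    rw [hvaliddef]
    exact Finset.mem_union_right _ (Finset.mem_image_of_mem _ (Finset.mem_range.mpr hi))
  have hvalidA : ∀ x ∈ TA, sTA x ∈ valid := by
    intro x hx
    by_cases hxB : x ∈ B k
    · have hj := (hidxB' x hxB).1
      rw [hsTA1 x hxB]
      by_cases hcb : CB (idxB x)
      · rw [hsB1 _ hcb]; exact hvalinr _ hj
      · rw [hsB2 _ hcb]; exact hvalinl _ hj
    · rw [hsTA2 x hxB]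
      exact hvalinl _ (hφk x (hRmemA x hx hxB))
  have hvalidB : ∀ x ∈ TB, sTB x ∈ valid := by
    intro x hx
    by_cases hxA : x ∈ A k
    · have hj := (hidxA' x hxA).1
      rw [hsTB1 x hxA]
      by_cases hca : CA (idxA x)
      · rw [hsA1 _ hca]; exact hvalinl _ hj
      · rw [hsA2 _ hca]; exact hvalinr _ (by omega)
    · rw [hsTB2 x hxA]
      exact hvalinr _ (hψk x (hRmemB x hx hxA))
  have hgpos : ∀ s ∈ valid, 0 ≤ g s := by
    intro s hs
    rw [hvaliddef] at hs
    rcases Finset.mem_union.mp hs with h | h <;> obtain ⟨i, hi, rfl⟩ := Finset.mem_image.mp h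
    · rw [hgl]; exact hgA i (Finset.mem_range.mp hi)
    · rw [hgr]; exact hgB i (Finset.mem_range.mp hi)
  -- total charge is at most f(A k) + f(B k)
  have hsumb : (∑ o ∈ TA, g (sTA o)) + (∑ o ∈ TB, g (sTB o)) ≤ f (A k) + f (B k) := by
    have e1 : ∑ o ∈ TA, g (sTA o) = ∑ s ∈ TA.image sTA, g s :=
      (Finset.sum_image (fun x hx y hy h => hinjTA (Finset.mem_coe.mpr hx)
        (Finset.mem_coe.mpr hy) h)).symm
    have e2 : ∑ o ∈ TB, g (sTB o) = ∑ s ∈ TB.image sTB, g s :=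
      (Finset.sum_image (fun x hx y hy h => hinjTB (Finset.mem_coe.mpr hx)
        (Finset.mem_coe.mpr hy) h)).symm
    rw [e1, e2, ← Finset.sum_union hdisjim]
    have hsubval : TA.image sTA ∪ TB.image sTB ⊆ valid :=
      Finset.union_subset (Finset.image_subset_iff.mpr hvalidA)
        (Finset.image_subset_iff.mpr hvalidB)
    have hdval : Disjoint ((Finset.range k).image (Sum.inl : ℕ → ℕ ⊕ ℕ))
        ((Finset.range k).image (Sum.inr : ℕ → ℕ ⊕ ℕ)) := by
      rw [Finset.disjoint_left]
      intro s h1 h2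
      obtain ⟨i, _, rfl⟩ := Finset.mem_image.mp h1
      obtain ⟨j, _, hj⟩ := Finset.mem_image.mp h2
      exact absurd hj (by simp)
    calc ∑ s ∈ TA.image sTA ∪ TB.image sTB, g s
        ≤ ∑ s ∈ valid, g s :=
          Finset.sum_le_sum_of_subset_of_nonneg hsubval (fun s hs _ => hgpos s hs)
      _ = (f (A k) - f (A 0)) + (f (B k) - f (B 0)) := by
          rw [hvaliddef, Finset.sum_union hdval,
            Finset.sum_image (by intro x _ y _ h; exact Sum.inl.inj h),
            Finset.sum_image (by intro x _ y _ h; exact Sum.inr.inj h)]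
          simp only [hgl, hgr]
          rw [Finset.sum_range_sub (fun i => f (A i)), Finset.sum_range_sub (fun i => f (B i))]
      _ ≤ f (A k) + f (B k) := by
          have h0 := hnn (∅ : Finset U)
          rw [hA0, hB0]
          linarith
  -- put everything together
  have hU1 : A k ∪ TA = O ∪ A k := by
    rw [hTAdef, Finset.union_sdiff_self_eq_union, Finset.union_comm]
  have hU2 : B k ∪ TB = O ∪ B k := by
    rw [hTBdef, Finset.union_sdiff_self_eq_union, Finset.union_comm]
  rw [hU1] at htel1
  rw [hU2] at htel2
  have hmain := hsub (O ∪ A k) (O ∪ B k)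
  have he1 : (O ∪ A k) ∪ (O ∪ B k) = O ∪ A k ∪ B k := by
    ext z
    simp only [Finset.mem_union]
    tauto
  have he2 : (O ∪ A k) ∩ (O ∪ B k) = O := by
    ext z
    simp only [Finset.mem_inter, Finset.mem_union]
    constructor
    · rintro ⟨h1 | h1, h2 | h2⟩
      · exact h1
      · exact h1
      · exact h2
      · exact absurd h2 (Finset.disjoint_left.mp hdisj h1)
    · intro h; exact ⟨Or.inl h, Or.inl h⟩
  rw [he1, he2] at hmain
  have h0 : (0 : ℝ) ≤ f (O ∪ A k ∪ B k) := hnn _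
  have hm1 : f (A k) ≤ max (f (A k)) (f (B k)) := le_max_left _ _
  have hm2 : f (B k) ≤ max (f (A k)) (f (B k)) := le_max_right _ _
  linarith
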